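/- There exists a positive constant C (depending only on λ) such that |S_{n+1}(x) − S_n(x)| ≤ C a_n for all n = 0, 1, 2, … and all x ∈ K. -/

import Mathlib

set_option linter.unusedSectionVars false
set_option maxHeartbeats 1000000


open MeasureTheory Filter Set Topology
open scoped ENNReal

noncomputable section

/-- Side length of generation-`n` squares: `s n = λ₁ ⋯ λₙ` (here `Λ k` is `λ_{k+1}`). -/
def sideLen (Λ : ℕ → ℝ) (n : ℕ) : ℝ := ∏ k ∈ Finset.range n, Λ k

/-- Lower-left corner of the generation-`n` square encoded by the word `w`. -/
def cornerPt (Λ : ℕ → ℝ) (w : ℕ → Bool × Bool) (n : ℕ) : ℂ :=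
  ∑ k ∈ Finset.range n,
    (((if (w k).1 then sideLen Λ k - sideLen Λ (k + 1) else 0 : ℝ) : ℂ) +
      ((if (w k).2 then sideLen Λ k - sideLen Λ (k + 1) else 0 : ℝ) : ℂ) * Complex.I)

/-- The (closed) generation-`n` square encoded by the word `w`. -/
def cSquare (Λ : ℕ → ℝ) (w : ℕ → Bool × Bool) (n : ℕ) : Set ℂ :=
  {z : ℂ | (cornerPt Λ w n).re ≤ z.re ∧ z.re ≤ (cornerPt Λ w n).re + sideLen Λ n ∧
    (cornerPt Λ w n).im ≤ z.im ∧ z.im ≤ (cornerPt Λ w n).im + sideLen Λ n}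

/-- The family `𝒟_n` of generation-`n` squares. -/
def genSq (Λ : ℕ → ℝ) (n : ℕ) : Set (Set ℂ) := {Q | ∃ w, Q = cSquare Λ w n}

/-- The planar Cantor set `K = ⋂ₙ ⋃ⱼ Qⱼⁿ`. -/
def cantorK (Λ : ℕ → ℝ) : Set ℂ := ⋂ n, ⋃ w : ℕ → Bool × Bool, cSquare Λ w n

/-- The linear density `a_n = 4^{-n}/s_n` at generation `n`. -/
def linDensity (Λ : ℕ → ℝ) (n : ℕ) : ℝ := 1 / (4 ^ n * sideLen Λ n)

open scoped Classical in
/-- `Q_n(x)`: the generation-`n` square containing `x` (the squares of a given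
generation are pairwise disjoint, so it is unique for `x ∈ K`). -/
def Qn (Λ : ℕ → ℝ) (n : ℕ) (x : ℂ) : Set ℂ :=
  if h : ∃ w, x ∈ cSquare Λ w n then cSquare Λ (Classical.choose h) n else ∅

/-- The truncated Cauchy integral at generation `n`:
`T_n(x) = ∫_{K ∖ Q_n(x)} (x-y)⁻¹ dμ(y)`. -/
def Tn (Λ : ℕ → ℝ) (μ : Measure ℂ) (n : ℕ) (x : ℂ) : ℂ :=
  ∫ y in cantorK Λ \ Qn Λ n x, (x - y)⁻¹ ∂μ

/-- The martingale `S_n(x) = μ(Q_n(x))⁻¹ ∫_{Q_n(x)} T_n dμ`. -/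
def Sn (Λ : ℕ → ℝ) (μ : Measure ℂ) (n : ℕ) (x : ℂ) : ℂ :=
  ⨍ z in Qn Λ n x, Tn Λ μ n z ∂μ

section Basic
variable {Λ : ℕ → ℝ} {lam : ℝ} (hlam : lam < 1 / 2) (hΛ : ∀ n, 1 / 4 ≤ Λ n ∧ Λ n ≤ lam)
include hΛ

lemma sideLen_succ' (n : ℕ) : sideLen Λ (n + 1) = sideLen Λ n * Λ n :=
  Finset.prod_range_succ _ _

lemma sideLen_pos (n : ℕ) : 0 < sideLen Λ n :=
  Finset.prod_pos fun k _ => lt_of_lt_of_le (by norm_num) (hΛ k).1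

include hlam in
lemma sideLen_gap (n : ℕ) :
    (1 - 2 * lam) * sideLen Λ n ≤ sideLen Λ n - 2 * sideLen Λ (n + 1) := by
  have h := sideLen_pos hΛ n
  rw [sideLen_succ' hΛ]
  nlinarith [(hΛ n).2]

include hlam in
lemma sideLen_succ_le (n : ℕ) : sideLen Λ (n + 1) ≤ sideLen Λ n := by
  have h := sideLen_pos hΛ n
  rw [sideLen_succ' hΛ]
  nlinarith [(hΛ n).2, (hΛ 0).1, (hΛ 0).2]

include hlam in
lemma sideLen_mono {k m : ℕ} (h : k ≤ m) : sideLen Λ m ≤ sideLen Λ k := by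
  induction m with
  | zero => simpa using (Nat.le_zero.mp h) ▸ le_refl _
  | succ m ih =>
    rcases Nat.lt_or_ge k (m+1) with h' | h'
    · exact (sideLen_succ_le hlam hΛ m).trans (ih (Nat.lt_succ_iff.mp h'))
    · have : k = m + 1 := le_antisymm h h'
      simp [this]

omit hΛ

/-- 1D corner coordinate. -/
def c1 (Λ : ℕ → ℝ) (b : ℕ → Bool) (n : ℕ) : ℝ :=
  ∑ k ∈ Finset.range n, if b k then sideLen Λ k - sideLen Λ (k + 1) else 0

lemma cornerPt_re (w : ℕ → Bool × Bool) (n : ℕ) :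
    (cornerPt Λ w n).re = c1 Λ (fun k => (w k).1) n := by
  unfold cornerPt c1
  rw [Complex.re_sum]
  refine Finset.sum_congr rfl fun k _ => ?_
  simp [Complex.add_re, Complex.mul_I_re]

lemma cornerPt_im (w : ℕ → Bool × Bool) (n : ℕ) :
    (cornerPt Λ w n).im = c1 Λ (fun k => (w k).2) n := by
  unfold cornerPt c1
  rw [Complex.im_sum]
  refine Finset.sum_congr rfl fun k _ => ?_
  simp [Complex.add_im, Complex.mul_I_im]

lemma c1_succ (b : ℕ → Bool) (n : ℕ) :
    c1 Λ b (n + 1) = c1 Λ b n + (if b n then sideLen Λ n - sideLen Λ (n + 1) else 0) :=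
  Finset.sum_range_succ _ _

lemma mem_cSquare_iff (w : ℕ → Bool × Bool) (n : ℕ) (z : ℂ) :
    z ∈ cSquare Λ w n ↔
      (c1 Λ (fun k => (w k).1) n ≤ z.re ∧ z.re ≤ c1 Λ (fun k => (w k).1) n + sideLen Λ n ∧
       c1 Λ (fun k => (w k).2) n ≤ z.im ∧ z.im ≤ c1 Λ (fun k => (w k).2) n + sideLen Λ n) := by
  simp only [cSquare, Set.mem_setOf_eq, cornerPt_re, cornerPt_im]

end Basic

section Geom
variable {Λ : ℕ → ℝ} {lam : ℝ} (hlam : lam < 1 / 2) (hΛ : ∀ n, 1 / 4 ≤ Λ n ∧ Λ n ≤ lam)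
include hlam hΛ

lemma two_sideLen_lt (n : ℕ) : 2 * sideLen Λ (n + 1) < sideLen Λ n := by
  have h := sideLen_pos hΛ n
  rw [sideLen_succ' hΛ]
  nlinarith [(hΛ n).2]

omit hlam in
lemma c1_zero (b : ℕ → Bool) : c1 Λ b 0 = 0 := by simp [c1]

/-- 1D nesting of intervals. -/
lemma c1_nest {b : ℕ → Bool} {n : ℕ} {t : ℝ}
    (h : c1 Λ b (n + 1) ≤ t ∧ t ≤ c1 Λ b (n + 1) + sideLen Λ (n + 1)) :
    c1 Λ b n ≤ t ∧ t ≤ c1 Λ b n + sideLen Λ n := by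
  have hmono := sideLen_succ_le hlam hΛ n
  rw [c1_succ] at h
  rcases Bool.eq_false_or_eq_true (b n) with hb | hb <;> simp [hb] at h <;>
    exact ⟨by linarith [h.1], by linarith [h.2]⟩

/-- 1D uniqueness: overlapping generation-`n` intervals have the same left endpoint. -/
lemma c1_uniq {b b' : ℕ → Bool} {t : ℝ} : ∀ {n : ℕ},
    (c1 Λ b n ≤ t ∧ t ≤ c1 Λ b n + sideLen Λ n) →
    (c1 Λ b' n ≤ t ∧ t ≤ c1 Λ b' n + sideLen Λ n) →
    c1 Λ b n = c1 Λ b' n := by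
  intro n
  induction n with
  | zero => intro _ _; rw [c1_zero hΛ, c1_zero hΛ]
  | succ n ih =>
    intro h h'
    have hc := ih (c1_nest hlam hΛ h) (c1_nest hlam hΛ h')
    rw [c1_succ, c1_succ, hc]
    congr 1
    by_contra hne
    have hbb : b n ≠ b' n := by intro he; rw [he] at hne; exact hne rfl
    have h2 := two_sideLen_lt hlam hΛ n
    rcases Bool.eq_false_or_eq_true (b n) with hb | hb <;>
      rcases Bool.eq_false_or_eq_true (b' n) with hb' | hb' <;>
        simp [hb, hb'] at hbb hne ⊢ <;>
        [skip; skip] <;>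
      · rw [c1_succ, hb] at h; rw [c1_succ, hb'] at h'
        simp at h h'
        rw [← hc] at h'
        linarith [h.1, h.2, h'.1, h'.2]

end Geom

section Geom2
variable {Λ : ℕ → ℝ} {lam : ℝ} (hlam : lam < 1 / 2) (hΛ : ∀ n, 1 / 4 ≤ Λ n ∧ Λ n ≤ lam)
include hlam hΛ

/-- 1D sibling separation. -/
lemma c1_sep {b b' : ℕ → Bool} {n : ℕ} (hc : c1 Λ b n = c1 Λ b' n) (hbb : b n ≠ b' n)
    {t u : ℝ} (ht : c1 Λ b (n + 1) ≤ t ∧ t ≤ c1 Λ b (n + 1) + sideLen Λ (n + 1))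
    (hu : c1 Λ b' (n + 1) ≤ u ∧ u ≤ c1 Λ b' (n + 1) + sideLen Λ (n + 1)) :
    (1 - 2 * lam) * sideLen Λ n ≤ |t - u| := by
  have hgap := sideLen_gap hlam hΛ n
  rw [c1_succ] at ht hu
  rw [← hc] at hu
  rw [le_abs]
  rcases Bool.eq_false_or_eq_true (b n) with hb | hb <;>
      rcases Bool.eq_false_or_eq_true (b' n) with hb' | hb' <;>
      simp [hb, hb'] at hbb ht hu
  · left; linarith [ht.1, ht.2, hu.1, hu.2]
  · right; linarith [ht.1, ht.2, hu.1, hu.2]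

omit hlam hΛ in
lemma cSquare_eq_of_corner_eq {w w' : ℕ → Bool × Bool} {n : ℕ}
    (h : cornerPt Λ w n = cornerPt Λ w' n) : cSquare Λ w n = cSquare Λ w' n := by
  unfold cSquare; rw [h]

omit hlam in
lemma corner_mem_cSquare (w : ℕ → Bool × Bool) (n : ℕ) :
    cornerPt Λ w n ∈ cSquare Λ w n := by
  have := (sideLen_pos hΛ n).le
  exact ⟨le_refl _, by linarith, le_refl _, by linarith⟩

omit hlam in
lemma corner_eq_of_cSquare_eq {w w' : ℕ → Bool × Bool} {n : ℕ}
    (h : cSquare Λ w n = cSquare Λ w' n) : cornerPt Λ w n = cornerPt Λ w' n := by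
  have h1 := corner_mem_cSquare hΛ w n
  have h2 := corner_mem_cSquare hΛ w' n
  rw [h] at h1; rw [← h] at h2
  obtain ⟨a1, -, a3, -⟩ := h1
  obtain ⟨b1, -, b3, -⟩ := h2
  exact Complex.ext (le_antisymm b1 a1) (le_antisymm b3 a3)

/-- two generation-`n` squares containing a common point are equal -/
lemma cSquare_uniq {w w' : ℕ → Bool × Bool} {n : ℕ} {z : ℂ}
    (hz : z ∈ cSquare Λ w n) (hz' : z ∈ cSquare Λ w' n) :
    cSquare Λ w n = cSquare Λ w' n := by
  rw [mem_cSquare_iff] at hz hz'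
  apply cSquare_eq_of_corner_eq
  apply Complex.ext
  · rw [cornerPt_re, cornerPt_re]
    exact c1_uniq hlam hΛ ⟨hz.1, hz.2.1⟩ ⟨hz'.1, hz'.2.1⟩
  · rw [cornerPt_im, cornerPt_im]
    exact c1_uniq hlam hΛ ⟨hz.2.2.1, hz.2.2.2⟩ ⟨hz'.2.2.1, hz'.2.2.2⟩

/-- 2D nesting. -/
lemma cSquare_nest {w : ℕ → Bool × Bool} {n : ℕ} :
    cSquare Λ w (n + 1) ⊆ cSquare Λ w n := by
  intro z hz
  rw [mem_cSquare_iff] at hz ⊢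
  obtain ⟨h1, h2, h3, h4⟩ := hz
  obtain ⟨a1, a2⟩ := c1_nest hlam hΛ ⟨h1, h2⟩
  obtain ⟨a3, a4⟩ := c1_nest hlam hΛ ⟨h3, h4⟩
  exact ⟨a1, a2, a3, a4⟩

/-- sibling separation in 2D -/
lemma cSquare_sep {w w' : ℕ → Bool × Bool} {k : ℕ}
    (hpar : cSquare Λ w k = cSquare Λ w' k)
    (hne : cSquare Λ w (k + 1) ≠ cSquare Λ w' (k + 1))
    {z y : ℂ} (hz : z ∈ cSquare Λ w (k + 1)) (hy : y ∈ cSquare Λ w' (k + 1)) :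
    (1 - 2 * lam) * sideLen Λ k ≤ ‖z - y‖ := by
  have hcorner := corner_eq_of_cSquare_eq hΛ hpar
  have hre : c1 Λ (fun j => (w j).1) k = c1 Λ (fun j => (w' j).1) k := by
    rw [← cornerPt_re, ← cornerPt_re, hcorner]
  have him : c1 Λ (fun j => (w j).2) k = c1 Λ (fun j => (w' j).2) k := by
    rw [← cornerPt_im, ← cornerPt_im, hcorner]
  rw [mem_cSquare_iff] at hz hy
  -- the corners at level k+1 differ
  have hcne : cornerPt Λ w (k+1) ≠ cornerPt Λ w' (k+1) :=
    fun h => hne (cSquare_eq_of_corner_eq h)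
  have hsgap : (0:ℝ) < sideLen Λ k - sideLen Λ (k+1) := by
    have := two_sideLen_lt hlam hΛ k
    have := sideLen_pos hΛ (k+1)
    linarith
  have key : (w k).1 ≠ (w' k).1 ∨ (w k).2 ≠ (w' k).2 := by
    by_contra hcon
    push_neg at hcon
    apply hcne
    apply Complex.ext
    · rw [cornerPt_re, cornerPt_re, c1_succ, c1_succ, hre, hcon.1]
    · rw [cornerPt_im, cornerPt_im, c1_succ, c1_succ, him, hcon.2]
  rcases key with hk | hk
  · calc (1 - 2*lam) * sideLen Λ k ≤ |z.re - y.re| :=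
          c1_sep hlam hΛ hre hk ⟨hz.1, hz.2.1⟩ ⟨hy.1, hy.2.1⟩
      _ = |(z - y).re| := by rw [Complex.sub_re]
      _ ≤ ‖z - y‖ := Complex.abs_re_le_norm _
  · calc (1 - 2*lam) * sideLen Λ k ≤ |z.im - y.im| :=
          c1_sep hlam hΛ him hk ⟨hz.2.2.1, hz.2.2.2⟩ ⟨hy.2.2.1, hy.2.2.2⟩
      _ = |(z - y).im| := by rw [Complex.sub_im]
      _ ≤ ‖z - y‖ := Complex.abs_im_le_norm _

end Geom2

section QnK
variable {Λ : ℕ → ℝ} {lam : ℝ} (hlam : lam < 1 / 2) (hΛ : ∀ n, 1 / 4 ≤ Λ n ∧ Λ n ≤ lam)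

omit hlam hΛ in
lemma cornerPt_congr {w w' : ℕ → Bool × Bool} {n : ℕ} (h : ∀ k < n, w k = w' k) :
    cornerPt Λ w n = cornerPt Λ w' n := by
  unfold cornerPt
  exact Finset.sum_congr rfl fun k hk => by rw [h k (Finset.mem_range.mp hk)]

omit hlam hΛ in
lemma cSquare_congr {w w' : ℕ → Bool × Bool} {n : ℕ} (h : ∀ k < n, w k = w' k) :
    cSquare Λ w n = cSquare Λ w' n :=
  cSquare_eq_of_corner_eq (cornerPt_congr h)

omit hlam hΛ in
lemma measurableSet_cSquare (w : ℕ → Bool × Bool) (n : ℕ) :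
    MeasurableSet (cSquare Λ w n) := by
  have : cSquare Λ w n =
      Complex.re ⁻¹' Set.Icc (cornerPt Λ w n).re ((cornerPt Λ w n).re + sideLen Λ n) ∩
      Complex.im ⁻¹' Set.Icc (cornerPt Λ w n).im ((cornerPt Λ w n).im + sideLen Λ n) := by
    ext z
    simp only [cSquare, Set.mem_setOf_eq, Set.mem_inter_iff, Set.mem_preimage, Set.mem_Icc]
    tauto
  rw [this]
  exact (Complex.measurable_re measurableSet_Icc).inter
    (Complex.measurable_im measurableSet_Icc)

omit hlam hΛ in
lemma measurableSet_Qn (n : ℕ) (x : ℂ) : MeasurableSet (Qn Λ n x) := by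
  unfold Qn
  split
  · exact measurableSet_cSquare _ _
  · exact MeasurableSet.empty

omit hlam hΛ in
lemma iUnion_cSquare_eq (n : ℕ) :
    (⋃ w : ℕ → Bool × Bool, cSquare Λ w n) =
      ⋃ v : Fin n → Bool × Bool,
        cSquare Λ (fun k => if h : k < n then v ⟨k, h⟩ else (false, false)) n := by
  apply Set.Subset.antisymm
  · refine Set.iUnion_subset fun w => ?_
    refine Set.subset_iUnion_of_subset (fun k => w k.1) (le_of_eq ?_)
    exact cSquare_congr fun k hk => by simp [hk]
  · exact Set.iUnion_subset fun v => Set.subset_iUnion_of_subset _ (le_of_eq rfl)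

omit hlam hΛ in
lemma measurableSet_cantorK : MeasurableSet (cantorK Λ) := by
  refine MeasurableSet.iInter fun n => ?_
  rw [iUnion_cSquare_eq]
  exact MeasurableSet.iUnion fun v => measurableSet_cSquare _ _

omit hlam hΛ in
lemma exists_cSquare_of_memK {x : ℂ} (hx : x ∈ cantorK Λ) (n : ℕ) :
    ∃ w, x ∈ cSquare Λ w n := by
  have := Set.mem_iInter.mp hx n
  exact Set.mem_iUnion.mp this

include hlam hΛ in
lemma Qn_eq {x : ℂ} {w : ℕ → Bool × Bool} {n : ℕ} (hx : x ∈ cSquare Λ w n) :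
    Qn Λ n x = cSquare Λ w n := by
  unfold Qn
  rw [dif_pos ⟨w, hx⟩]
  exact cSquare_uniq hlam hΛ (Classical.choose_spec (⟨w, hx⟩ : ∃ w, x ∈ cSquare Λ w n)) hx

include hlam hΛ in
lemma Qn_spec {x : ℂ} (hx : x ∈ cantorK Λ) (n : ℕ) :
    ∃ w, Qn Λ n x = cSquare Λ w n ∧ x ∈ cSquare Λ w n := by
  obtain ⟨w, hw⟩ := exists_cSquare_of_memK hx n
  exact ⟨w, Qn_eq hlam hΛ hw, hw⟩

include hlam hΛ in
lemma mem_Qn {x : ℂ} (hx : x ∈ cantorK Λ) (n : ℕ) : x ∈ Qn Λ n x := by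
  obtain ⟨w, hQ, hw⟩ := Qn_spec hlam hΛ hx n
  rw [hQ]; exact hw

include hlam hΛ in
lemma Qn_succ_subset {x : ℂ} (hx : x ∈ cantorK Λ) (n : ℕ) :
    Qn Λ (n + 1) x ⊆ Qn Λ n x := by
  obtain ⟨w, hw⟩ := exists_cSquare_of_memK hx (n + 1)
  rw [Qn_eq hlam hΛ hw, Qn_eq hlam hΛ (cSquare_nest hlam hΛ hw)]
  exact cSquare_nest hlam hΛ

include hlam hΛ in
lemma Qn_mono {x : ℂ} (hx : x ∈ cantorK Λ) {k n : ℕ} (h : k ≤ n) :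
    Qn Λ n x ⊆ Qn Λ k x := by
  induction n with
  | zero => rw [Nat.le_zero.mp h]
  | succ n ih =>
    rcases Nat.lt_or_ge k (n + 1) with h' | h'
    · exact (Qn_succ_subset hlam hΛ hx n).trans (ih (Nat.lt_succ_iff.mp h'))
    · rw [le_antisymm h h']

include hlam hΛ in
lemma K_subset_Qn_zero {x z : ℂ} (hx : x ∈ cantorK Λ) (hz : z ∈ cantorK Λ) :
    z ∈ Qn Λ 0 x := by
  obtain ⟨w, hQ, hw⟩ := Qn_spec hlam hΛ hx 0
  obtain ⟨w', hw'⟩ := exists_cSquare_of_memK hz 0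
  rw [hQ, cSquare_eq_of_corner_eq (w' := w')
    (by unfold cornerPt; simp)]
  exact hw'

include hlam hΛ in
/-- For `z ∈ K` lying in `Qn n x`, the square of `z` is that of `x`. -/
lemma Qn_eq_of_mem {x z : ℂ} (hx : x ∈ cantorK Λ) (hz : z ∈ cantorK Λ) {n : ℕ}
    (hzx : z ∈ Qn Λ n x) : Qn Λ n z = Qn Λ n x := by
  obtain ⟨w, hQ, hw⟩ := Qn_spec hlam hΛ hx n
  rw [hQ] at hzx ⊢
  exact Qn_eq hlam hΛ hzx

end QnK

section MeasureSide
variable {Λ : ℕ → ℝ} {lam : ℝ} (hlam : lam < 1 / 2) (hΛ : ∀ n, 1 / 4 ≤ Λ n ∧ Λ n ≤ lam)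
variable {μ : Measure ℂ} [IsProbabilityMeasure μ] (hμK : μ (cantorK Λ) = 1)
variable (hμQ : ∀ (w : ℕ → Bool × Bool) (n : ℕ), μ (cSquare Λ w n) = (4 : ℝ≥0∞)⁻¹ ^ n)

include hμK in
lemma ae_memK : ∀ᵐ z ∂μ, z ∈ cantorK Λ :=
  mem_ae_iff.mpr ((prob_compl_eq_zero_iff measurableSet_cantorK).mpr hμK)

include hlam hΛ hμQ in
lemma μ_Qn {x : ℂ} (hx : x ∈ cantorK Λ) (n : ℕ) : μ (Qn Λ n x) = (4 : ℝ≥0∞)⁻¹ ^ n := by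
  obtain ⟨w, hQ, -⟩ := Qn_spec hlam hΛ hx n
  rw [hQ, hμQ]

lemma quarter_pow_toReal (n : ℕ) : ((4 : ℝ≥0∞)⁻¹ ^ n).toReal = (1/4 : ℝ) ^ n := by
  rw [ENNReal.toReal_pow, ENNReal.toReal_inv]
  norm_num

lemma quarter_pow_ne_zero (n : ℕ) : ((4 : ℝ≥0∞)⁻¹ ^ n) ≠ 0 := by
  apply pow_ne_zero
  simp

lemma quarter_pow_ne_top (n : ℕ) : ((4 : ℝ≥0∞)⁻¹ ^ n) ≠ ∞ := by
  apply ENNReal.pow_ne_top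
  simp

/-- Strong measurability of the parametrized integral. -/
lemma stronglyMeasurable_paramInt (S : Set ℂ) (hS : MeasurableSet S) :
    StronglyMeasurable fun z => ∫ y in S, (z - y)⁻¹ ∂μ := by
  classical
  have h : ∀ z : ℂ, ∫ y in S, (z - y)⁻¹ ∂μ
      = ∫ y, (fun p : ℂ × ℂ =>
          Set.indicator (Prod.snd ⁻¹' S) (fun q : ℂ × ℂ => (q.1 - q.2)⁻¹) p) (z, y) ∂μ := by
    intro z
    rw [← integral_indicator hS]
    congr 1
  simp_rw [h]
  apply MeasureTheory.StronglyMeasurable.integral_prod_right'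
  apply Measurable.stronglyMeasurable
  exact ((measurable_fst.sub measurable_snd).inv).indicator (measurable_snd hS)

/-- The layer at generation `k`. -/
def layer (Λ : ℕ → ℝ) (x : ℂ) (k : ℕ) : Set ℂ :=
  (cantorK Λ ∩ Qn Λ k x) \ Qn Λ (k + 1) x

omit hlam hΛ in
lemma measurableSet_layer (x : ℂ) (k : ℕ) : MeasurableSet (layer Λ x k) :=
  ((measurableSet_cantorK.inter (measurableSet_Qn k x)).diff (measurableSet_Qn (k+1) x))

include hlam hΛ in
lemma layer_decomp {x : ℂ} (hx : x ∈ cantorK Λ) (n : ℕ) :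
    cantorK Λ \ Qn Λ n x = ⋃ k ∈ Finset.range n, layer Λ x k := by
  ext y
  simp only [Set.mem_diff, Set.mem_iUnion, Finset.mem_range, layer, Set.mem_inter_iff,
    Set.mem_diff]
  constructor
  · rintro ⟨hyK, hyQ⟩
    have hex : ∃ j, y ∉ Qn Λ j x := ⟨n, hyQ⟩
    classical
    set m := Nat.find hex with hm
    have hspec : y ∉ Qn Λ m x := Nat.find_spec hex
    have hm0 : m ≠ 0 := by
      intro h0
      exact (h0 ▸ hspec) (K_subset_Qn_zero hlam hΛ hx hyK)
    obtain ⟨k, hk⟩ := Nat.exists_eq_succ_of_ne_zero hm0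
    have hkm : y ∈ Qn Λ k x := by
      by_contra hcon
      exact Nat.find_min hex (by omega) hcon
    have hmn : m ≤ n := Nat.find_min' hex hyQ
    refine ⟨k, by omega, ⟨hyK, hkm⟩, ?_⟩
    rw [hk] at hspec
    exact hspec
  · rintro ⟨k, hkn, ⟨hyK, -⟩, hyQ⟩
    exact ⟨hyK, fun hc => hyQ (Qn_mono hlam hΛ hx (by omega) hc)⟩

include hlam hΛ in
lemma layer_disjoint {x : ℂ} (hx : x ∈ cantorK Λ) {k j : ℕ} (hkj : k ≠ j) :
    Disjoint (layer Λ x k) (layer Λ x j) := by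
  wlog h : k < j generalizing k j
  · exact (this hkj.symm (by omega)).symm
  rw [Set.disjoint_left]
  rintro y ⟨-, hyk⟩ ⟨⟨-, hyj⟩, -⟩
  exact hyk (Qn_mono hlam hΛ hx (by omega) hyj)

include hlam hΛ in
lemma layer_sep {x : ℂ} (hx : x ∈ cantorK Λ) {k : ℕ} {z y : ℂ}
    (hz : z ∈ Qn Λ (k + 1) x) (hy : y ∈ layer Λ x k) :
    (1 - 2 * lam) * sideLen Λ k ≤ ‖z - y‖ := by
  obtain ⟨⟨hyK, hyk⟩, hyk1⟩ := hy
  obtain ⟨v, hv⟩ := exists_cSquare_of_memK hx (k + 1)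
  have hQk1 : Qn Λ (k + 1) x = cSquare Λ v (k + 1) := Qn_eq hlam hΛ hv
  have hQk : Qn Λ k x = cSquare Λ v k := Qn_eq hlam hΛ (cSquare_nest hlam hΛ hv)
  obtain ⟨u, hu⟩ := exists_cSquare_of_memK hyK (k + 1)
  have hpar : cSquare Λ v k = cSquare Λ u k := by
    apply cSquare_uniq hlam hΛ (hQk ▸ hyk) (cSquare_nest hlam hΛ hu)
  have hne : cSquare Λ v (k + 1) ≠ cSquare Λ u (k + 1) := by
    intro he
    exact hyk1 (hQk1 ▸ (he ▸ hu))
  exact cSquare_sep hlam hΛ hpar hne (hQk1 ▸ hz) hu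

include hlam hΛ in
/-- separation between a generation-`n` square and the rest of `K`. -/
lemma sep_diff {x : ℂ} (hx : x ∈ cantorK Λ) {n : ℕ} {z y : ℂ}
    (hz : z ∈ Qn Λ n x) (hy : y ∈ cantorK Λ \ Qn Λ n x) :
    (1 - 2 * lam) * sideLen Λ n ≤ ‖z - y‖ := by
  rw [layer_decomp hlam hΛ hx n] at hy
  simp only [Set.mem_iUnion, Finset.mem_range] at hy
  obtain ⟨k, hkn, hyk⟩ := hy
  calc (1 - 2*lam) * sideLen Λ n ≤ (1 - 2*lam) * sideLen Λ k := by
        have := sideLen_mono hlam hΛ (Nat.le_of_lt_succ (by omega) : k ≤ n)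
        have h2 : (0:ℝ) < 1 - 2*lam := by linarith
        nlinarith
    _ ≤ ‖z - y‖ := layer_sep hlam hΛ hx (Qn_mono hlam hΛ hx (by omega) hz) hyk

end MeasureSide

section IntegSide
variable {Λ : ℕ → ℝ} {lam : ℝ} (hlam : lam < 1 / 2) (hΛ : ∀ n, 1 / 4 ≤ Λ n ∧ Λ n ≤ lam)
variable {μ : Measure ℂ} [IsProbabilityMeasure μ] (hμK : μ (cantorK Λ) = 1)

omit hlam hΛ hμK in
lemma norm_setAverage_le {f : ℂ → ℂ} {s : Set ℂ} {C : ℝ} (hC : 0 ≤ C)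
    (h : ∀ᵐ z ∂(μ.restrict s), ‖f z‖ ≤ C) : ‖⨍ z in s, f z ∂μ‖ ≤ C := by
  rw [setAverage_eq, norm_smul]
  have h1 : ‖∫ z in s, f z ∂μ‖ ≤ C * (μ s).toReal := by
    have h2 := norm_integral_le_of_norm_le (integrable_const C (μ := μ.restrict s)) h
    simpa [Measure.restrict_apply_univ, mul_comm, measureReal_def] using h2
  rcases eq_or_ne ((μ s).toReal) 0 with h0 | h0
  · simp [measureReal_def, h0, hC]
  · have hpos : 0 < (μ s).toReal := lt_of_le_of_ne ENNReal.toReal_nonneg (Ne.symm h0)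
    calc ‖((μ s).toReal⁻¹ : ℝ)‖ * ‖∫ z in s, f z ∂μ‖
        ≤ (μ s).toReal⁻¹ * (C * (μ s).toReal) := by
          rw [Real.norm_eq_abs, abs_of_nonneg (inv_nonneg.mpr ENNReal.toReal_nonneg)]
          exact mul_le_mul_of_nonneg_left h1 (inv_nonneg.mpr ENNReal.toReal_nonneg)
      _ = C := by field_simp
include hlam hΛ

lemma eps_pos : (0:ℝ) < 1 - 2 * lam := by linarith

include hμK in
lemma integrableOn_inv {x : ℂ} (hx : x ∈ cantorK Λ) {n : ℕ} {z : ℂ} (hz : z ∈ Qn Λ n x) :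
    IntegrableOn (fun y => (z - y)⁻¹) (cantorK Λ \ Qn Λ n x) μ := by
  have hd : (0:ℝ) < (1 - 2 * lam) * sideLen Λ n :=
    mul_pos (eps_pos hlam hΛ) (sideLen_pos hΛ n)
  have hmeas : MeasurableSet (cantorK Λ \ Qn Λ n x) :=
    measurableSet_cantorK.diff (measurableSet_Qn n x)
  refine Integrable.mono' (integrable_const (((1 - 2 * lam) * sideLen Λ n)⁻¹))
    ((measurable_const.sub measurable_id).inv).aestronglyMeasurable
    (((ae_restrict_iff' hmeas).2 (ae_of_all _ fun y hy => ?_)))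
  rw [norm_inv]
  exact inv_anti₀ hd (sep_diff hlam hΛ hx hz hy)

lemma Tn_eq_of_mem {x : ℂ} (hx : x ∈ cantorK Λ) {n : ℕ} {z : ℂ}
    (hz : z ∈ cantorK Λ ∩ Qn Λ n x) :
    Tn Λ μ n z = ∫ y in cantorK Λ \ Qn Λ n x, (z - y)⁻¹ ∂μ := by
  unfold Tn
  rw [Qn_eq_of_mem hlam hΛ hx hz.1 hz.2]

lemma norm_Tn_le {x : ℂ} (hx : x ∈ cantorK Λ) {n : ℕ} {z : ℂ}
    (hz : z ∈ cantorK Λ ∩ Qn Λ n x) :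
    ‖Tn Λ μ n z‖ ≤ ((1 - 2 * lam) * sideLen Λ n)⁻¹ := by
  have hd : (0:ℝ) < (1 - 2 * lam) * sideLen Λ n :=
    mul_pos (eps_pos hlam hΛ) (sideLen_pos hΛ n)
  rw [Tn_eq_of_mem hlam hΛ hx hz]
  have h := norm_setIntegral_le_of_norm_le_const (μ := μ)
    (s := cantorK Λ \ Qn Λ n x) (C := ((1 - 2 * lam) * sideLen Λ n)⁻¹)
    (measure_lt_top _ _)
    (fun y hy => by rw [norm_inv]; exact inv_anti₀ hd (sep_diff hlam hΛ hx hz.2 hy))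
    (f := fun y => (z - y)⁻¹)
  calc ‖∫ y in cantorK Λ \ Qn Λ n x, (z - y)⁻¹ ∂μ‖
      ≤ ((1 - 2 * lam) * sideLen Λ n)⁻¹ * (μ (cantorK Λ \ Qn Λ n x)).toReal := h
    _ ≤ ((1 - 2 * lam) * sideLen Λ n)⁻¹ * 1 := by
        apply mul_le_mul_of_nonneg_left _ (inv_nonneg.mpr hd.le)
        rw [show (1:ℝ) = (1:ℝ≥0∞).toReal by simp]
        exact ENNReal.toReal_mono (by simp) prob_le_one
    _ = ((1 - 2 * lam) * sideLen Λ n)⁻¹ := mul_one _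

include hμK in
lemma integrableOn_Tn {x : ℂ} (hx : x ∈ cantorK Λ) (n : ℕ) {s : Set ℂ}
    (hs : s ⊆ Qn Λ n x) (hsm : MeasurableSet s) :
    IntegrableOn (Tn Λ μ n) s μ := by
  set g : ℂ → ℂ := fun z => ∫ y in cantorK Λ \ Qn Λ n x, (z - y)⁻¹ ∂μ with hgdef
  have hg : StronglyMeasurable g :=
    stronglyMeasurable_paramInt _ (measurableSet_cantorK.diff (measurableSet_Qn n x))
  have hae : Tn Λ μ n =ᵐ[μ.restrict s] g := by
    filter_upwards [ae_restrict_of_ae (ae_memK hμK), ae_restrict_mem hsm] with z hzK hzs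
    exact Tn_eq_of_mem hlam hΛ hx ⟨hzK, hs hzs⟩
  have hbound : ∀ᵐ z ∂(μ.restrict s), ‖Tn Λ μ n z‖ ≤ ((1 - 2 * lam) * sideLen Λ n)⁻¹ := by
    filter_upwards [ae_restrict_of_ae (ae_memK hμK), ae_restrict_mem hsm] with z hzK hzs
    exact norm_Tn_le hlam hΛ hx ⟨hzK, hs hzs⟩
  exact Integrable.mono' (integrable_const _)
    (hg.aestronglyMeasurable.congr hae.symm) hbound

end IntegSide

section KeyEstimates
variable {Λ : ℕ → ℝ} {lam : ℝ} (hlam : lam < 1 / 2) (hΛ : ∀ n, 1 / 4 ≤ Λ n ∧ Λ n ≤ lam)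
variable {μ : Measure ℂ} [IsProbabilityMeasure μ] (hμK : μ (cantorK Λ) = 1)
variable (hμQ : ∀ (w : ℕ → Bool × Bool) (n : ℕ), μ (cSquare Λ w n) = (4 : ℝ≥0∞)⁻¹ ^ n)
include hlam hΛ

lemma lam_lb : (1/4 : ℝ) ≤ lam := le_trans (hΛ 0).1 (hΛ 0).2

omit hμK hμQ in
lemma Qn_diam {x : ℂ} (hx : x ∈ cantorK Λ) {n : ℕ} {z z' : ℂ}
    (hz : z ∈ Qn Λ n x) (hz' : z' ∈ Qn Λ n x) : ‖z - z'‖ ≤ 2 * sideLen Λ n := by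
  obtain ⟨w, hQ, -⟩ := Qn_spec hlam hΛ hx n
  rw [hQ, mem_cSquare_iff] at hz hz'
  calc ‖z - z'‖ ≤ |(z - z').re| + |(z - z').im| := Complex.norm_le_abs_re_add_abs_im _
    _ ≤ sideLen Λ n + sideLen Λ n := by
        rw [Complex.sub_re, Complex.sub_im]
        gcongr
        · rw [abs_le]; constructor <;>
            linarith [hz.1, hz.2.1, hz'.1, hz'.2.1]
        · rw [abs_le]; constructor <;>
            linarith [hz.2.2.1, hz.2.2.2, hz'.2.2.1, hz'.2.2.2]
    _ = 2 * sideLen Λ n := by ring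

omit hμK hμQ in
lemma layer_subset_diff {x : ℂ} (hx : x ∈ cantorK Λ) {k n : ℕ} (hkn : k < n) :
    layer Λ x k ⊆ cantorK Λ \ Qn Λ n x := by
  rw [layer_decomp hlam hΛ hx n]
  intro y hy
  simp only [Set.mem_iUnion, Finset.mem_range]
  exact ⟨k, hkn, hy⟩

omit hμK hμQ in
/-- geometric sum of the quantities `t k = 4^{-k}/s_k²`. -/
lemma sum_t_le (n : ℕ) :
    ∑ k ∈ Finset.range n, (1/4:ℝ)^k / (sideLen Λ k)^2 ≤
      (4*lam^2/(1-4*lam^2)) * ((1/4:ℝ)^n / (sideLen Λ n)^2) := by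
  have hl4 := lam_lb hlam hΛ
  have hq0 : (0:ℝ) < 4*lam^2 := by nlinarith
  have hq1 : 4*lam^2 < 1 := by nlinarith
  have key : ∀ m : ℕ, (1/4:ℝ)^m / (sideLen Λ m)^2 ≤
      (4*lam^2) * ((1/4:ℝ)^(m+1) / (sideLen Λ (m+1))^2) := by
    intro m
    have hsm := sideLen_pos hΛ m
    have hsm1 := sideLen_pos hΛ (m+1)
    have h1 : sideLen Λ (m+1) ≤ lam * sideLen Λ m := by
      rw [sideLen_succ' hΛ]
      nlinarith [(hΛ m).2]
    have h2 : (sideLen Λ (m+1))^2 ≤ lam^2 * (sideLen Λ m)^2 := by nlinarith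
    have ha : (0:ℝ) < (1/4:ℝ)^m := by positivity
    have heq : (4*lam^2) * ((1/4:ℝ)^(m+1) / (sideLen Λ (m+1))^2)
        = lam^2 * (1/4:ℝ)^m / (sideLen Λ (m+1))^2 := by
      rw [pow_succ]; field_simp; ring
    rw [heq, div_le_div_iff₀ (by positivity) (by positivity)]
    nlinarith
  induction n with
  | zero =>
    simp only [Finset.range_zero, Finset.sum_empty]
    have hs0 := sideLen_pos hΛ 0
    have h1 : (0:ℝ) ≤ 4*lam^2/(1-4*lam^2) := div_nonneg hq0.le (by linarith)
    positivity
  | succ n ih =>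
    rw [Finset.sum_range_succ]
    set B := 4*lam^2/(1-4*lam^2) with hB
    set t : ℕ → ℝ := fun k => (1/4:ℝ)^k / (sideLen Λ k)^2 with ht
    have hBpos : 0 < B := div_pos hq0 (by linarith)
    have hBq : (B + 1) * (4*lam^2) = B := by
      have hne : 1-4*lam^2 ≠ 0 := by linarith
      rw [hB]
      field_simp
      ring
    have htpos : 0 < t (n+1) := by
      have := sideLen_pos hΛ (n+1); positivity
    calc (∑ k ∈ Finset.range n, t k) + t n ≤ B * t n + t n := by linarith [ih]
      _ = (B + 1) * t n := by ring
      _ ≤ (B + 1) * ((4*lam^2) * t (n+1)) := by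
          have := key n
          nlinarith
      _ = B * t (n+1) := by rw [← mul_assoc, hBq]

end KeyEstimates

section KeyAB
variable {Λ : ℕ → ℝ} {lam : ℝ} (hlam : lam < 1 / 2) (hΛ : ∀ n, 1 / 4 ≤ Λ n ∧ Λ n ≤ lam)
variable {μ : Measure ℂ} [IsProbabilityMeasure μ] (hμK : μ (cantorK Λ) = 1)
variable (hμQ : ∀ (w : ℕ → Bool × Bool) (n : ℕ), μ (cSquare Λ w n) = (4 : ℝ≥0∞)⁻¹ ^ n)
include hlam hΛ

omit hlam hΛ in
lemma linDensity_eq (n : ℕ) : linDensity Λ n = (1/4:ℝ)^n / sideLen Λ n := by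
  rw [linDensity, div_pow, one_pow, div_div]

include hμK hμQ in
lemma toReal_μ_layer_le {x : ℂ} (hx : x ∈ cantorK Λ) (k : ℕ) :
    (μ (layer Λ x k)).toReal ≤ (1/4:ℝ)^k := by
  rw [← quarter_pow_toReal]
  apply ENNReal.toReal_mono (quarter_pow_ne_top k)
  rw [← μ_Qn hlam hΛ hμQ hx k]
  exact measure_mono fun y hy => hy.1.2

include hμK hμQ in
lemma key_A {x : ℂ} (hx : x ∈ cantorK Λ) (n : ℕ) {z : ℂ}
    (hz : z ∈ cantorK Λ ∩ Qn Λ (n+1) x) :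
    ‖Tn Λ μ (n+1) z - Tn Λ μ n z‖ ≤ (1-2*lam)⁻¹ * linDensity Λ n := by
  have hsub := Qn_succ_subset hlam hΛ hx n
  have hzQ : z ∈ Qn Λ n x := hsub hz.2
  have hd : (0:ℝ) < (1 - 2*lam) * sideLen Λ n :=
    mul_pos (eps_pos hlam hΛ) (sideLen_pos hΛ n)
  have hsn := sideLen_pos hΛ n
  have hmeasL : MeasurableSet (layer Λ x n) := measurableSet_layer x n
  have hU : cantorK Λ \ Qn Λ (n+1) x = (cantorK Λ \ Qn Λ n x) ∪ layer Λ x n := by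
    ext y
    simp only [Set.mem_diff, Set.mem_union, layer, Set.mem_inter_iff, Set.mem_diff]
    constructor
    · rintro ⟨hyK, hyQ⟩
      by_cases hyn : y ∈ Qn Λ n x
      · exact Or.inr ⟨⟨hyK, hyn⟩, hyQ⟩
      · exact Or.inl ⟨hyK, hyn⟩
    · rintro (⟨hyK, hyn⟩ | ⟨⟨hyK, hyn⟩, hyQ⟩)
      · exact ⟨hyK, fun hc => hyn (hsub hc)⟩
      · exact ⟨hyK, hyQ⟩
  have hint1 : IntegrableOn (fun y => (z - y)⁻¹) (cantorK Λ \ Qn Λ n x) μ :=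
    integrableOn_inv hlam hΛ hμK hx hzQ
  have hintL : IntegrableOn (fun y => (z - y)⁻¹) (layer Λ x n) μ :=
    (integrableOn_inv hlam hΛ hμK hx hz.2).mono_set
      (fun y hy => ⟨hy.1.1, hy.2⟩)
  have hdisj : Disjoint (cantorK Λ \ Qn Λ n x) (layer Λ x n) := by
    rw [Set.disjoint_left]
    rintro y ⟨-, hyn⟩ ⟨⟨-, hyn'⟩, -⟩
    exact hyn hyn'
  rw [Tn_eq_of_mem hlam hΛ hx hz, Tn_eq_of_mem hlam hΛ hx ⟨hz.1, hzQ⟩, hU,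
    setIntegral_union hdisj hmeasL hint1 hintL, add_sub_cancel_left]
  have hb := norm_setIntegral_le_of_norm_le_const (μ := μ) (s := layer Λ x n)
    (C := ((1 - 2*lam) * sideLen Λ n)⁻¹) (measure_lt_top _ _)
    (fun y hy => by
      rw [norm_inv]
      exact inv_anti₀ hd (layer_sep hlam hΛ hx hz.2 hy))
    (f := fun y => (z - y)⁻¹)
  calc ‖∫ y in layer Λ x n, (z - y)⁻¹ ∂μ‖
      ≤ ((1 - 2*lam) * sideLen Λ n)⁻¹ * (μ (layer Λ x n)).toReal := hb
    _ ≤ ((1 - 2*lam) * sideLen Λ n)⁻¹ * (1/4:ℝ)^n := by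
        exact mul_le_mul_of_nonneg_left (toReal_μ_layer_le hlam hΛ hμK hμQ hx n)
          (inv_nonneg.mpr hd.le)
    _ = (1-2*lam)⁻¹ * linDensity Λ n := by
        rw [linDensity_eq, mul_inv]
        ring

include hμK hμQ in
lemma key_B {x : ℂ} (hx : x ∈ cantorK Λ) (n : ℕ) {z z' : ℂ}
    (hz : z ∈ cantorK Λ ∩ Qn Λ n x) (hz' : z' ∈ cantorK Λ ∩ Qn Λ n x) :
    ‖Tn Λ μ n z - Tn Λ μ n z'‖ ≤
      (2*(4*lam^2/(1-4*lam^2)) / (1-2*lam)^2) * linDensity Λ n := by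
  have hε := eps_pos hlam hΛ
  have hsn := sideLen_pos hΛ n
  have hintd : IntegrableOn (fun y => (z - y)⁻¹ - (z' - y)⁻¹) (cantorK Λ \ Qn Λ n x) μ :=
    Integrable.sub (integrableOn_inv hlam hΛ hμK hx hz.2)
      (integrableOn_inv hlam hΛ hμK hx hz'.2)
  have hsplit : ∫ y in ⋃ k ∈ Finset.range n, layer Λ x k, ((z - y)⁻¹ - (z' - y)⁻¹) ∂μ
      = ∑ k ∈ Finset.range n, ∫ y in layer Λ x k, ((z - y)⁻¹ - (z' - y)⁻¹) ∂μ :=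
    integral_biUnion_finset (f := fun y => (z - y)⁻¹ - (z' - y)⁻¹) (Finset.range n)
      (fun k _ => measurableSet_layer x k)
      (fun k _ j _ hkj => layer_disjoint hlam hΛ hx hkj)
      (fun k hk => hintd.mono_set (layer_subset_diff hlam hΛ hx (Finset.mem_range.mp hk)))
  rw [Tn_eq_of_mem hlam hΛ hx hz, Tn_eq_of_mem hlam hΛ hx hz',
    ← integral_sub (integrableOn_inv hlam hΛ hμK hx hz.2)
      (integrableOn_inv hlam hΛ hμK hx hz'.2),
    layer_decomp hlam hΛ hx n, hsplit]
  have hbound : ∀ k ∈ Finset.range n,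
      ‖∫ y in layer Λ x k, ((z - y)⁻¹ - (z' - y)⁻¹) ∂μ‖ ≤
        (2 * sideLen Λ n / ((1-2*lam) * sideLen Λ k)^2) * (1/4:ℝ)^k := by
    intro k hk
    have hkn := Finset.mem_range.mp hk
    have hsk := sideLen_pos hΛ k
    have hdk : (0:ℝ) < (1 - 2*lam) * sideLen Λ k := mul_pos hε hsk
    have hzk : z ∈ Qn Λ (k+1) x := Qn_mono hlam hΛ hx (by omega) hz.2
    have hzk' : z' ∈ Qn Λ (k+1) x := Qn_mono hlam hΛ hx (by omega) hz'.2
    have hptwise : ∀ y ∈ layer Λ x k,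
        ‖(z - y)⁻¹ - (z' - y)⁻¹‖ ≤ 2 * sideLen Λ n / ((1-2*lam) * sideLen Λ k)^2 := by
      intro y hy
      have ha : (1 - 2*lam) * sideLen Λ k ≤ ‖z - y‖ := layer_sep hlam hΛ hx hzk hy
      have hb : (1 - 2*lam) * sideLen Λ k ≤ ‖z' - y‖ := layer_sep hlam hΛ hx hzk' hy
      have ha0 : z - y ≠ 0 := norm_pos_iff.mp (lt_of_lt_of_le hdk ha)
      have hb0 : z' - y ≠ 0 := norm_pos_iff.mp (lt_of_lt_of_le hdk hb)
      have hid : (z - y)⁻¹ - (z' - y)⁻¹ = (z' - z) * ((z - y)⁻¹ * (z' - y)⁻¹) := by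
        field_simp
        ring
      rw [hid, norm_mul, norm_mul, norm_inv, norm_inv]
      have hdiam : ‖z' - z‖ ≤ 2 * sideLen Λ n := Qn_diam hlam hΛ hx hz'.2 hz.2
      calc ‖z' - z‖ * (‖z - y‖⁻¹ * ‖z' - y‖⁻¹)
          ≤ (2 * sideLen Λ n) * (((1 - 2*lam) * sideLen Λ k)⁻¹ *
              ((1 - 2*lam) * sideLen Λ k)⁻¹) := by
            apply mul_le_mul hdiam _ (by positivity) (by positivity)
            exact mul_le_mul (inv_anti₀ hdk ha) (inv_anti₀ hdk hb)
              (by positivity) (inv_nonneg.mpr hdk.le)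
        _ = 2 * sideLen Λ n / ((1-2*lam) * sideLen Λ k)^2 := by
            have h1 : (1:ℝ) - 2*lam ≠ 0 := hε.ne'
            have h2 : sideLen Λ k ≠ 0 := hsk.ne'
            field_simp
    have hmb := norm_setIntegral_le_of_norm_le_const (μ := μ) (s := layer Λ x k)
      (C := 2 * sideLen Λ n / ((1-2*lam) * sideLen Λ k)^2) (measure_lt_top _ _)
      hptwise
      (f := fun y => (z - y)⁻¹ - (z' - y)⁻¹)
    calc ‖∫ y in layer Λ x k, ((z - y)⁻¹ - (z' - y)⁻¹) ∂μ‖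
        ≤ (2 * sideLen Λ n / ((1-2*lam) * sideLen Λ k)^2) * (μ (layer Λ x k)).toReal := hmb
      _ ≤ (2 * sideLen Λ n / ((1-2*lam) * sideLen Λ k)^2) * (1/4:ℝ)^k :=
          mul_le_mul_of_nonneg_left (toReal_μ_layer_le hlam hΛ hμK hμQ hx k)
            (by positivity)
  calc ‖∑ k ∈ Finset.range n, ∫ y in layer Λ x k, ((z - y)⁻¹ - (z' - y)⁻¹) ∂μ‖
      ≤ ∑ k ∈ Finset.range n, ‖∫ y in layer Λ x k, ((z - y)⁻¹ - (z' - y)⁻¹) ∂μ‖ :=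
        norm_sum_le _ _
    _ ≤ ∑ k ∈ Finset.range n, (2 * sideLen Λ n / ((1-2*lam) * sideLen Λ k)^2) * (1/4:ℝ)^k :=
        Finset.sum_le_sum hbound
    _ = (2 * sideLen Λ n / (1-2*lam)^2) *
          ∑ k ∈ Finset.range n, (1/4:ℝ)^k / (sideLen Λ k)^2 := by
        rw [Finset.mul_sum]
        refine Finset.sum_congr rfl fun k hk => ?_
        have hsk := (sideLen_pos hΛ k).ne'
        field_simp
    _ ≤ (2 * sideLen Λ n / (1-2*lam)^2) *
          ((4*lam^2/(1-4*lam^2)) * ((1/4:ℝ)^n / (sideLen Λ n)^2)) := by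
        apply mul_le_mul_of_nonneg_left (sum_t_le hlam hΛ n) (by positivity)
    _ = (2*(4*lam^2/(1-4*lam^2)) / (1-2*lam)^2) * linDensity Λ n := by
        have hl4 := lam_lb hlam hΛ
        have hne1 : 1 - 4*lam^2 ≠ 0 := by nlinarith
        have hne2 : 1 - 2*lam ≠ 0 := by linarith
        have hne3 : sideLen Λ n ≠ 0 := hsn.ne'
        rw [linDensity_eq]
        field_simp

end KeyAB

/-- The martingale has increments bounded by the densities:
`|S_{n+1}(x) - S_n(x)| ≤ C a_n` for all `n ≥ 0` and `x ∈ K`. -/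
theorem martingale_increment_bound (Λ : ℕ → ℝ) (lam : ℝ) (hlam : lam < 1 / 2)
    (hΛ : ∀ n, 1 / 4 ≤ Λ n ∧ Λ n ≤ lam)
    (μ : Measure ℂ) [IsProbabilityMeasure μ]
    (hμK : μ (cantorK Λ) = 1)
    (hμQ : ∀ (w : ℕ → Bool × Bool) (n : ℕ), μ (cSquare Λ w n) = (4 : ℝ≥0∞)⁻¹ ^ n) :
    ∃ C : ℝ, 0 < C ∧ ∀ (n : ℕ), ∀ x ∈ cantorK Λ,
      ‖Sn Λ μ (n + 1) x - Sn Λ μ n x‖ ≤ C * linDensity Λ n := by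
  have hε := eps_pos hlam hΛ
  have hl4 := lam_lb hlam hΛ
  have hq1 : 4 * lam ^ 2 < 1 := by nlinarith
  have hq0 : (0:ℝ) < 4 * lam ^ 2 := by nlinarith
  set Cb : ℝ := 2*(4*lam^2/(1-4*lam^2)) / (1-2*lam)^2 with hCb
  have hCb0 : 0 ≤ Cb := by
    apply div_nonneg _ (by positivity)
    have : (0:ℝ) ≤ 4*lam^2/(1-4*lam^2) := div_nonneg hq0.le (by linarith)
    linarith
  refine ⟨(1-2*lam)⁻¹ + Cb, by positivity, fun n x hx => ?_⟩
  have ha : 0 < linDensity Λ n := by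
    have := sideLen_pos hΛ n
    rw [linDensity]
    positivity
  set Q : Set ℂ := Qn Λ n x with hQdef
  set Q' : Set ℂ := Qn Λ (n+1) x with hQ'def
  have hsub : Q' ⊆ Q := Qn_succ_subset hlam hΛ hx n
  have hQm : MeasurableSet Q := measurableSet_Qn n x
  have hQ'm : MeasurableSet Q' := measurableSet_Qn (n+1) x
  have hμQn : μ Q = (4 : ℝ≥0∞)⁻¹ ^ n := μ_Qn hlam hΛ hμQ hx n
  have hμQ'n : μ Q' = (4 : ℝ≥0∞)⁻¹ ^ (n+1) := μ_Qn hlam hΛ hμQ hx (n+1)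
  have htoR : (μ Q).toReal = (1/4:ℝ)^n := by rw [hμQn, quarter_pow_toReal]
  have htoR' : (μ Q').toReal = (1/4:ℝ)^(n+1) := by rw [hμQ'n, quarter_pow_toReal]
  have htoR_ne : (μ Q).toReal ≠ 0 := by rw [htoR]; positivity
  have htoR'_ne : (μ Q').toReal ≠ 0 := by rw [htoR']; positivity
  have hT1 : IntegrableOn (Tn Λ μ (n+1)) Q' μ :=
    integrableOn_Tn hlam hΛ hμK hx (n+1) (le_refl _) hQ'm
  have hT0 : IntegrableOn (Tn Λ μ n) Q μ :=
    integrableOn_Tn hlam hΛ hμK hx n (le_refl _) hQm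
  have hT0' : IntegrableOn (Tn Λ μ n) Q' μ :=
    integrableOn_Tn hlam hΛ hμK hx n hsub hQ'm
  set c : ℂ := ⨍ z in Q, Tn Λ μ n z ∂μ with hcdef
  have havg : ∀ z : ℂ, Tn Λ μ n z - c = ⨍ z' in Q, (Tn Λ μ n z - Tn Λ μ n z') ∂μ := by
    intro z
    rw [setAverage_eq,
      integral_sub (integrableOn_const (μ := μ) (s := Q) (C := Tn Λ μ n z) (measure_lt_top _ _).ne) hT0,
      integral_const, measureReal_restrict_apply_univ, smul_sub, smul_smul,
      inv_mul_cancel₀ (a := μ.real Q) htoR_ne, one_smul, hcdef, setAverage_eq]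
  have hdecomp : Sn Λ μ (n+1) x - Sn Λ μ n x =
      (⨍ z in Q', (Tn Λ μ (n+1) z - Tn Λ μ n z) ∂μ) +
        (⨍ z in Q', (Tn Λ μ n z - c) ∂μ) := by
    have e1 : ⨍ z in Q', (Tn Λ μ (n+1) z - Tn Λ μ n z) ∂μ =
        (⨍ z in Q', Tn Λ μ (n+1) z ∂μ) - ⨍ z in Q', Tn Λ μ n z ∂μ := by
      rw [setAverage_eq, setAverage_eq, setAverage_eq, ← smul_sub,
        ← integral_sub hT1 hT0']
    have e2 : ⨍ z in Q', (Tn Λ μ n z - c) ∂μ =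
        (⨍ z in Q', Tn Λ μ n z ∂μ) - c := by
      rw [setAverage_eq, setAverage_eq,
        integral_sub hT0' (integrableOn_const (μ := μ) (s := Q') (C := c) (measure_lt_top _ _).ne),
        integral_const, measureReal_restrict_apply_univ, smul_sub, smul_smul,
        inv_mul_cancel₀ (a := μ.real Q') htoR'_ne, one_smul]
    rw [e1, e2]
    have : Sn Λ μ (n+1) x = ⨍ z in Q', Tn Λ μ (n+1) z ∂μ := rfl
    have h2 : Sn Λ μ n x = c := rfl
    rw [this, h2]
    ring
  rw [hdecomp]
  have hbound1 : ‖⨍ z in Q', (Tn Λ μ (n+1) z - Tn Λ μ n z) ∂μ‖ ≤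
      (1-2*lam)⁻¹ * linDensity Λ n := by
    apply norm_setAverage_le (by positivity)
    filter_upwards [ae_restrict_of_ae (ae_memK hμK), ae_restrict_mem hQ'm] with z hzK hzQ
    exact key_A hlam hΛ hμK hμQ hx n ⟨hzK, hzQ⟩
  have hbound2 : ‖⨍ z in Q', (Tn Λ μ n z - c) ∂μ‖ ≤ Cb * linDensity Λ n := by
    apply norm_setAverage_le (by positivity)
    filter_upwards [ae_restrict_of_ae (ae_memK hμK), ae_restrict_mem hQ'm] with z hzK hzQ
    rw [havg z]
    apply norm_setAverage_le (by positivity)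
    filter_upwards [ae_restrict_of_ae (ae_memK hμK), ae_restrict_mem hQm] with z' hz'K hz'Q
    exact key_B hlam hΛ hμK hμQ hx n ⟨hzK, hsub hzQ⟩ ⟨hz'K, hz'Q⟩
  calc ‖(⨍ z in Q', (Tn Λ μ (n+1) z - Tn Λ μ n z) ∂μ) +
        (⨍ z in Q', (Tn Λ μ n z - c) ∂μ)‖
      ≤ ‖⨍ z in Q', (Tn Λ μ (n+1) z - Tn Λ μ n z) ∂μ‖ +
        ‖⨍ z in Q', (Tn Λ μ n z - c) ∂μ‖ := norm_add_le _ _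
    _ ≤ (1-2*lam)⁻¹ * linDensity Λ n + Cb * linDensity Λ n := add_le_add hbound1 hbound2
    _ = ((1-2*lam)⁻¹ + Cb) * linDensity Λ n := by ring
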